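/- (L¹ bound between an interpolated graph transformer and the manifold transformer.) Let μ be a Borel probability measure on X, let x_1, …, x_N ∈ X, and let V_1, …, V_N be pairwise disjoint Borel sets whose union is X, with V_j contained in the closed ball of radius r > 0 centered at x_j and μ(V_j) = 1/N for every j. Assume ‖f(x)‖ ≤ 1 for all x ∈ X, let X_1, …, X_N ∈ ℝ^D satisfy ‖X_j − f(x_j)‖ ≤ Δ and ‖X_j‖ ≤ 1 for all j, and let M ≥ 0 satisfy |⟨Q X_i, K X_j⟩| ≤ M for all i, j and |⟨Q f(u), K f(v)⟩| ≤ M for all u, v ∈ X. Define the piecewise-constant interpolation (I_N Φ_G)(x) = Φ_G(j) for x ∈ V_j, and set Δ_Φ = (C_V + 4·exp(2M)·C_Q·C_K·C_V)·Δ + (exp(M)·C_V + 2·exp(2M)·C_Q·C_K·C_V)·r. Then ∫_X ‖(I_N Φ_G)(x) − Φ_M(x)‖ dμ(x) ≤ Δ_Φ + 2·exp(2M)·C_Q·C_K·C_V·r. -/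

import Mathlib

open MeasureTheory
open scoped RealInnerProductSpace BigOperators

/-- L¹ bound between the interpolated graph transformer and the manifold
transformer: with `g` the piecewise-constant interpolation of the graph-transformer
outputs (`g x = Φ_G(j)` for `x ∈ P j`) and
`Δ_Φ = (C_V + 4·exp(2M)·C_Q·C_K·C_V)·Δ + (exp(M)·C_V + 2·exp(2M)·C_Q·C_K·C_V)·r`,
`∫ ‖g x − Φ_M x‖ dμ ≤ Δ_Φ + 2·exp(2M)·C_Q·C_K·C_V·r`. -/

lemma exp_abs_sub_le {x y M : ℝ} (hx : |x| ≤ M) (hy : |y| ≤ M) :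
    |Real.exp x - Real.exp y| ≤ Real.exp M * |x - y| := by
  wlog h : y ≤ x generalizing x y
  · rw [abs_sub_comm, abs_sub_comm x y]; exact this hy hx (le_of_not_ge h)
  have h1 := Real.add_one_le_exp (y - x)
  have h2 : Real.exp (y - x) * Real.exp x = Real.exp y := by
    rw [← Real.exp_add]; ring_nf
  have h3 : Real.exp x ≤ Real.exp M := Real.exp_le_exp.mpr ((le_abs_self x).trans hx)
  have h4 := Real.exp_pos x
  have h5 : Real.exp y ≤ Real.exp x := Real.exp_le_exp.mpr h
  rw [abs_of_nonneg (by linarith), abs_of_nonneg (by linarith)]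
  nlinarith

lemma softmax_diff_le {E : Type*} [NormedAddCommGroup E] [NormedSpace ℝ E]
    {s t CV e1 e2 : ℝ} {A B : E} (hs : 0 < s) (ht : 0 < t)
    (hB : ‖B‖ ≤ CV * t) (hAB : ‖A - B‖ ≤ e1) (hst : |t - s| ≤ e2) :
    ‖s⁻¹ • A - t⁻¹ • B‖ ≤ e1 / s + CV * e2 / s := by
  have key : s⁻¹ • A - t⁻¹ • B = s⁻¹ • (A - B) + ((s⁻¹ - t⁻¹) • B) := by
    rw [smul_sub, sub_smul]; abel
  rw [key]
  refine (norm_add_le _ _).trans ?_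
  have h1 : ‖s⁻¹ • (A - B)‖ ≤ e1 / s := by
    rw [norm_smul, Real.norm_eq_abs, abs_of_pos (inv_pos.mpr hs), div_eq_inv_mul]
    exact mul_le_mul_of_nonneg_left hAB (by positivity)
  have h2 : ‖(s⁻¹ - t⁻¹) • B‖ ≤ CV * e2 / s := by
    rw [norm_smul, Real.norm_eq_abs]
    have habs : |s⁻¹ - t⁻¹| = |t - s| / (s * t) := by
      rw [inv_sub_inv hs.ne' ht.ne', abs_div, abs_of_pos (mul_pos hs ht)]
    rw [habs]
    have hBnn : (0:ℝ) ≤ ‖B‖ := norm_nonneg _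
    have h0 : |t - s| / (s * t) * ‖B‖ ≤ e2 / (s * t) * (CV * t) := by
      have hst2 : 0 < s * t := mul_pos hs ht
      have := norm_nonneg B
      have he2 : 0 ≤ e2 := le_trans (abs_nonneg _) hst
      apply mul_le_mul _ hB (norm_nonneg _) (by positivity)
      exact by gcongr
    calc |t - s| / (s * t) * ‖B‖ ≤ e2 / (s * t) * (CV * t) := h0
      _ = CV * e2 / s := by field_simp
  linarith

set_option maxHeartbeats 2000000 in
theorem interpolated_graph_transformer_L1_bound
    {D : ℕ} {X : Type*} [MetricSpace X] [MeasurableSpace X] [BorelSpace X]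
    (μ : Measure X) [IsProbabilityMeasure μ]
    (Q K V : EuclideanSpace ℝ (Fin D) →ₗ[ℝ] EuclideanSpace ℝ (Fin D))
    (C_Q C_K C_V Δ r : ℝ)
    (hCQ : 0 < C_Q) (hCK : 0 < C_K) (hCV : 0 < C_V) (hΔ : 0 ≤ Δ) (hr : 0 < r)
    (hQ : ∀ u, ‖Q u‖ ≤ C_Q * ‖u‖) (hK : ∀ u, ‖K u‖ ≤ C_K * ‖u‖)
    (hV : ∀ u, ‖V u‖ ≤ C_V * ‖u‖)
    (f : X → EuclideanSpace ℝ (Fin D))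
    (hfLip : ∀ a b, ‖f a - f b‖ ≤ dist a b)
    (hf1 : ∀ a : X, ‖f a‖ ≤ 1)
    (N : ℕ) (x : Fin N → X) (P : Fin N → Set X)
    (hPmeas : ∀ j, MeasurableSet (P j))
    (hPdisj : Pairwise fun j k => Disjoint (P j) (P k))
    (hPcover : (⋃ j, P j) = Set.univ)
    (hPball : ∀ j, P j ⊆ Metric.closedBall (x j) r)
    (hPmass : ∀ j, μ (P j) = (N : ENNReal)⁻¹)
    (Xv : Fin N → EuclideanSpace ℝ (Fin D))
    (hXv : ∀ j, ‖Xv j - f (x j)‖ ≤ Δ) (hXv1 : ∀ j, ‖Xv j‖ ≤ 1)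
    (M : ℝ) (hM0 : 0 ≤ M)
    (hM1 : ∀ i j, abs ⟪Q (Xv i), K (Xv j)⟫ ≤ M)
    (hM2 : ∀ u v : X, abs ⟪Q (f u), K (f v)⟫ ≤ M)
    (g : X → EuclideanSpace ℝ (Fin D))
    (hg : ∀ j : Fin N, ∀ y ∈ P j,
      g y = (∑ k, Real.exp ⟪Q (Xv j), K (Xv k)⟫)⁻¹ •
              (∑ k, Real.exp ⟪Q (Xv j), K (Xv k)⟫ • V (Xv k)))
    (ΔΦ : ℝ)
    (hΔΦ : ΔΦ = (C_V + 4 * Real.exp (2 * M) * C_Q * C_K * C_V) * Δ +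
        (Real.exp M * C_V + 2 * Real.exp (2 * M) * C_Q * C_K * C_V) * r) :
    (∫ y, ‖g y -
        ((∫ z, Real.exp ⟪Q (f y), K (f z)⟫ ∂μ)⁻¹ •
          (∫ z, Real.exp ⟪Q (f y), K (f z)⟫ • V (f z) ∂μ))‖ ∂μ)
      ≤ ΔΦ + 2 * Real.exp (2 * M) * C_Q * C_K * C_V * r := by
  
  classical
  -- N is positive
  have hNpos : 0 < N := by
    rcases Nat.eq_zero_or_pos N with h | h
    · exfalso
      subst h
      have hempty : (Set.univ : Set X) = ∅ := by
        rw [← hPcover]; simp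
      have h1 : μ Set.univ = 1 := measure_univ
      rw [hempty] at h1; simp at h1
    · exact h
  have hNR : (0:ℝ) < N := by exact_mod_cast hNpos
  -- continuity facts
  have hfc : Continuous f := by
    have hl : LipschitzWith 1 f := by
      apply LipschitzWith.of_dist_le_mul
      intro a b
      rw [dist_eq_norm]
      simpa using hfLip a b
    exact hl.continuous
  have hKc : Continuous K := K.continuous_of_finiteDimensional
  have hVc : Continuous V := V.continuous_of_finiteDimensional
  -- constants
  set E : ℝ := Real.exp M with hE
  have hEpos : 0 < E := Real.exp_pos M
  have hE1 : 1 ≤ E := by rw [hE, ← Real.exp_zero]; exact Real.exp_le_exp.mpr hM0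
  have hE2 : Real.exp (2 * M) = E * E := by rw [hE, ← Real.exp_add]; ring_nf
  set ρ : ℝ := Δ + r with hρ
  have hρpos : 0 < ρ := by simp only [hρ]; linarith
  set c1 : ℝ := 2 * E * C_Q * C_K * C_V * ρ with hc1
  set c2 : ℝ := 2 * E * C_Q * C_K * ρ with hc2
  set Btot : ℝ := C_V * ρ + 4 * (E * E) * C_Q * C_K * C_V * ρ with hBtot
  -- norms of values
  have hvz : ∀ z : X, ‖V (f z)‖ ≤ C_V := fun z =>
    (hV (f z)).trans (by nlinarith [hf1 z, norm_nonneg (f z)])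
  have hwk : ∀ k, ‖V (Xv k)‖ ≤ C_V := fun k =>
    (hV (Xv k)).trans (by nlinarith [hXv1 k, norm_nonneg (Xv k)])
  -- the pointwise bound
  have hpt : ∀ y : X, ‖g y -
      ((∫ z, Real.exp ⟪Q (f y), K (f z)⟫ ∂μ)⁻¹ •
        (∫ z, Real.exp ⟪Q (f y), K (f z)⟫ • V (f z) ∂μ))‖ ≤ Btot := by
    intro y
    obtain ⟨j, hyj⟩ : ∃ j, y ∈ P j := by
      have : y ∈ ⋃ j, P j := by rw [hPcover]; trivial
      exact Set.mem_iUnion.mp this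
    set b : Fin N → ℝ := fun k => Real.exp ⟪Q (Xv j), K (Xv k)⟫ with hb
    set a : X → ℝ := fun z => Real.exp ⟪Q (f y), K (f z)⟫ with ha
    set s : ℝ := ∑ k, b k with hs
    set A : EuclideanSpace ℝ (Fin D) := ∑ k, b k • V (Xv k) with hA
    set t : ℝ := ∫ z, a z ∂μ with ht
    set B : EuclideanSpace ℝ (Fin D) := ∫ z, a z • V (f z) ∂μ with hB
    have hgy : g y = s⁻¹ • A := hg j y hyj
    -- bounds on b and a
    have hbk_le : ∀ k, b k ≤ E := fun k =>
      Real.exp_le_exp.mpr ((le_abs_self _).trans (hM1 j k))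
    have hbk_ge : ∀ k, E⁻¹ ≤ b k := fun k => by
      rw [hE, ← Real.exp_neg]
      exact Real.exp_le_exp.mpr (neg_le_of_abs_le (hM1 j k))
    have hbk_pos : ∀ k, 0 < b k := fun k => Real.exp_pos _
    have ha_le : ∀ z, a z ≤ E := fun z =>
      Real.exp_le_exp.mpr ((le_abs_self _).trans (hM2 y z))
    have ha_ge : ∀ z, E⁻¹ ≤ a z := fun z => by
      rw [hE, ← Real.exp_neg]
      exact Real.exp_le_exp.mpr (neg_le_of_abs_le (hM2 y z))
    have ha_pos : ∀ z, 0 < a z := fun z => Real.exp_pos _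
    -- s bounds
    have hs_lb : (N : ℝ) * E⁻¹ ≤ s := by
      calc (N : ℝ) * E⁻¹ = ∑ _k : Fin N, E⁻¹ := by
            rw [Finset.sum_const, Finset.card_univ, Fintype.card_fin, nsmul_eq_mul]
        _ ≤ s := Finset.sum_le_sum fun k _ => hbk_ge k
    have hs_pos : 0 < s := lt_of_lt_of_le (by positivity) hs_lb
    have hNsE : (N : ℝ) ≤ s * E := by
      have := mul_le_mul_of_nonneg_right hs_lb hEpos.le
      calc (N:ℝ) = (N:ℝ) * E⁻¹ * E := by field_simp
        _ ≤ s * E := this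
    have hNs : (N : ℝ) / s ≤ E := (div_le_iff₀ hs_pos).mpr (by linarith)
    -- integrability
    have hac : Continuous a := by
      apply Real.continuous_exp.comp
      exact Continuous.inner continuous_const (hKc.comp hfc)
    have hai : Integrable a μ := by
      apply (integrable_const E).mono' hac.aestronglyMeasurable
      filter_upwards with z
      rw [Real.norm_eq_abs, abs_of_pos (ha_pos z)]
      exact ha_le z
    have havc : Continuous fun z => a z • V (f z) := hac.smul (hVc.comp hfc)
    have havi : Integrable (fun z => a z • V (f z)) μ := by
      apply (integrable_const (E * C_V)).mono' havc.aestronglyMeasurable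
      filter_upwards with z
      rw [norm_smul, Real.norm_eq_abs, abs_of_pos (ha_pos z)]
      exact mul_le_mul (ha_le z) (hvz z) (norm_nonneg _) hEpos.le
    -- t bounds
    have ht_lb : E⁻¹ ≤ t := by
      have : ∫ (_z : X), E⁻¹ ∂μ ≤ t := by
        apply integral_mono (integrable_const _) hai
        intro z; exact ha_ge z
      simpa using this
    have ht_pos : 0 < t := lt_of_lt_of_le (by positivity) ht_lb
    -- ‖B‖ ≤ C_V * t
    have hBle : ‖B‖ ≤ C_V * t := by
      calc ‖B‖ ≤ ∫ z, ‖a z • V (f z)‖ ∂μ := norm_integral_le_integral_norm _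
        _ ≤ ∫ z, C_V * a z ∂μ := by
            apply integral_mono havi.norm (hai.const_mul C_V)
            intro z
            show ‖a z • V (f z)‖ ≤ C_V * a z
            rw [norm_smul, Real.norm_eq_abs, abs_of_pos (ha_pos z)]
            rw [mul_comm C_V (a z)]
            exact mul_le_mul_of_nonneg_left (hvz z) (ha_pos z).le
        _ = C_V * t := by rw [ht, integral_const_mul]
    -- measure facts
    have hμk : ∀ k, (μ (P k)).toReal = (N:ℝ)⁻¹ := by
      intro k
      rw [hPmass k]
      simp [ENNReal.toReal_inv]
    have hμlt : ∀ k, μ (P k) < ⊤ := fun k => measure_lt_top μ _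
    -- splitting the integrals over the partition
    have hsplitB : B = ∑ k, ∫ z in P k, a z • V (f z) ∂μ := by
      rw [hB, ← setIntegral_univ (μ := μ), ← hPcover,
        integral_iUnion hPmeas hPdisj (by rw [hPcover]; exact havi.integrableOn),
        tsum_fintype]
    have hsplitT : t = ∑ k, ∫ z in P k, a z ∂μ := by
      rw [ht, ← setIntegral_univ (μ := μ), ← hPcover,
        integral_iUnion hPmeas hPdisj (by rw [hPcover]; exact hai.integrableOn),
        tsum_fintype]
    -- geometry
    have hXf : ∀ k, ∀ z ∈ P k, ‖Xv k - f z‖ ≤ ρ := by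
      intro k z hz
      have h1 : ‖f (x k) - f z‖ ≤ r := by
        have := hfLip (x k) z
        have hd : dist z (x k) ≤ r := Metric.mem_closedBall.mp (hPball k hz)
        rw [dist_comm] at hd
        linarith
      calc ‖Xv k - f z‖ = ‖(Xv k - f (x k)) + (f (x k) - f z)‖ := by rw [sub_add_sub_cancel]
        _ ≤ ‖Xv k - f (x k)‖ + ‖f (x k) - f z‖ := norm_add_le _ _
        _ ≤ Δ + r := add_le_add (hXv k) h1
    have hXy : ‖Xv j - f y‖ ≤ ρ := hXf j y hyj
    -- score bound
    have hscore : ∀ k, ∀ z ∈ P k,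
        |⟪Q (Xv j), K (Xv k)⟫ - ⟪Q (f y), K (f z)⟫| ≤ 2 * C_Q * C_K * ρ := by
      intro k z hz
      have hdecomp : ⟪Q (Xv j), K (Xv k)⟫ - ⟪Q (f y), K (f z)⟫
          = ⟪Q (Xv j) - Q (f y), K (Xv k)⟫ + ⟪Q (f y), K (Xv k) - K (f z)⟫ := by
        rw [inner_sub_left, inner_sub_right]; ring
      rw [hdecomp]
      have e1 : |⟪Q (Xv j) - Q (f y), K (Xv k)⟫| ≤ C_Q * ρ * (C_K * 1) := by
        refine (abs_real_inner_le_norm _ _).trans ?_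
        apply mul_le_mul _ _ (norm_nonneg _) (by positivity)
        · rw [← map_sub]
          exact (hQ _).trans (by nlinarith [hXy])
        · exact (hK _).trans (by nlinarith [hXv1 k, norm_nonneg (Xv k)])
      have e2 : |⟪Q (f y), K (Xv k) - K (f z)⟫| ≤ C_Q * 1 * (C_K * ρ) := by
        refine (abs_real_inner_le_norm _ _).trans ?_
        apply mul_le_mul _ _ (norm_nonneg _) (by positivity)
        · exact (hQ _).trans (by nlinarith [hf1 y, norm_nonneg (f y)])
        · rw [← map_sub]
          exact (hK _).trans (by nlinarith [hXf k z hz])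
      calc |⟪Q (Xv j) - Q (f y), K (Xv k)⟫ + ⟪Q (f y), K (Xv k) - K (f z)⟫|
          ≤ |⟪Q (Xv j) - Q (f y), K (Xv k)⟫| + |⟪Q (f y), K (Xv k) - K (f z)⟫| := abs_add_le _ _
        _ ≤ C_Q * ρ * (C_K * 1) + C_Q * 1 * (C_K * ρ) := add_le_add e1 e2
        _ = 2 * C_Q * C_K * ρ := by ring
    have hba : ∀ k, ∀ z ∈ P k, |b k - a z| ≤ c2 := by
      intro k z hz
      have := exp_abs_sub_le (hM1 j k) (hM2 y z)
      calc |b k - a z| ≤ E * |⟪Q (Xv j), K (Xv k)⟫ - ⟪Q (f y), K (f z)⟫| := this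
        _ ≤ E * (2 * C_Q * C_K * ρ) := mul_le_mul_of_nonneg_left (hscore k z hz) hEpos.le
        _ = c2 := by rw [hc2]; ring
    -- termwise vector bound
    have hterm : ∀ k, ∀ z ∈ P k,
        ‖b k • V (Xv k) - a z • V (f z)‖ ≤ b k * (C_V * ρ) + c1 := by
      intro k z hz
      have hdec : b k • V (Xv k) - a z • V (f z)
          = b k • (V (Xv k) - V (f z)) + (b k - a z) • V (f z) := by
        rw [smul_sub, sub_smul]; abel
      rw [hdec]
      refine (norm_add_le _ _).trans ?_
      have t1 : ‖b k • (V (Xv k) - V (f z))‖ ≤ b k * (C_V * ρ) := by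
        rw [norm_smul, Real.norm_eq_abs, abs_of_pos (hbk_pos k), ← map_sub]
        apply mul_le_mul_of_nonneg_left _ (hbk_pos k).le
        exact (hV _).trans (by nlinarith [hXf k z hz])
      have t2 : ‖(b k - a z) • V (f z)‖ ≤ c1 := by
        rw [norm_smul, Real.norm_eq_abs]
        calc |b k - a z| * ‖V (f z)‖ ≤ c2 * C_V := by
              apply mul_le_mul (hba k z hz) (hvz z) (norm_nonneg _)
              rw [hc2]; positivity
          _ = c1 := by rw [hc1, hc2]; ring
      linarith
    -- per-k vector bound
    have hAk : ∀ k, ‖b k • V (Xv k) - (N:ℝ) • ∫ z in P k, a z • V (f z) ∂μ‖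
        ≤ b k * (C_V * ρ) + c1 := by
      intro k
      have hconst : b k • V (Xv k) = (N:ℝ) • ∫ _z in P k, b k • V (Xv k) ∂μ := by
        rw [setIntegral_const, measureReal_def, hμk k, smul_smul, mul_inv_cancel₀ hNR.ne']
        simp
      rw [hconst, ← smul_sub, ← integral_sub (integrableOn_const (C := b k • V (Xv k)) (hμlt k).ne)
        havi.integrableOn]
      rw [norm_smul, Real.norm_eq_abs, abs_of_pos hNR]
      have hnorm : ‖∫ z in P k, (b k • V (Xv k) - a z • V (f z)) ∂μ‖
          ≤ (b k * (C_V * ρ) + c1) * (μ (P k)).toReal := by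
        apply norm_setIntegral_le_of_norm_le_const (hμlt k) (hterm k)
      rw [hμk k] at hnorm
      calc (N:ℝ) * ‖∫ z in P k, (b k • V (Xv k) - a z • V (f z)) ∂μ‖
          ≤ (N:ℝ) * ((b k * (C_V * ρ) + c1) * (N:ℝ)⁻¹) := by
            exact mul_le_mul_of_nonneg_left hnorm hNR.le
        _ = b k * (C_V * ρ) + c1 := by field_simp
    -- global vector bound
    have hAB : ‖A - (N:ℝ) • B‖ ≤ C_V * ρ * s + (N:ℝ) * c1 := by
      rw [hsplitB, Finset.smul_sum, hA, ← Finset.sum_sub_distrib]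
      refine (norm_sum_le _ _).trans ?_
      calc ∑ k, ‖b k • V (Xv k) - (N:ℝ) • ∫ z in P k, a z • V (f z) ∂μ‖
          ≤ ∑ k, (b k * (C_V * ρ) + c1) := Finset.sum_le_sum fun k _ => hAk k
        _ = C_V * ρ * s + (N:ℝ) * c1 := by
            rw [Finset.sum_add_distrib, Finset.sum_const, Finset.card_univ,
              Fintype.card_fin, ← Finset.sum_mul, ← hs, nsmul_eq_mul]
            ring
    -- per-k scalar bound
    have hTk : ∀ k, |b k - (N:ℝ) * ∫ z in P k, a z ∂μ| ≤ c2 := by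
      intro k
      have hconst : b k = (N:ℝ) * ∫ _z in P k, b k ∂μ := by
        rw [setIntegral_const, measureReal_def, hμk k, smul_eq_mul]
        field_simp
      rw [hconst, ← mul_sub, ← integral_sub (integrableOn_const (C := b k) (hμlt k).ne)
        hai.integrableOn]
      rw [abs_mul, abs_of_pos hNR]
      have hnorm : |∫ z in P k, (b k - a z) ∂μ| ≤ c2 * (μ (P k)).toReal := by
        have := norm_setIntegral_le_of_norm_le_const (μ := μ) (s := P k)
          (f := fun z => b k - a z) (C := c2) (hμlt k) ?_
        · rw [← measureReal_def]; simpa using this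
        · intro z hz; rw [Real.norm_eq_abs]; exact hba k z hz
      rw [hμk k] at hnorm
      calc (N:ℝ) * |∫ z in P k, (b k - a z) ∂μ| ≤ (N:ℝ) * (c2 * (N:ℝ)⁻¹) :=
            mul_le_mul_of_nonneg_left hnorm hNR.le
        _ = c2 := by field_simp
    -- global scalar bound
    have hST : |(N:ℝ) * t - s| ≤ (N:ℝ) * c2 := by
      rw [abs_sub_comm, hsplitT, Finset.mul_sum, hs, ← Finset.sum_sub_distrib]
      refine (Finset.abs_sum_le_sum_abs _ _).trans ?_
      calc ∑ k, |b k - (N:ℝ) * ∫ z in P k, a z ∂μ| ≤ ∑ _k : Fin N, c2 :=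
            Finset.sum_le_sum fun k _ => hTk k
        _ = (N:ℝ) * c2 := by
            rw [Finset.sum_const, Finset.card_univ, Fintype.card_fin, nsmul_eq_mul]
    -- assemble
    have hNt_pos : 0 < (N:ℝ) * t := by positivity
    have hBle' : ‖(N:ℝ) • B‖ ≤ C_V * ((N:ℝ) * t) := by
      rw [norm_smul, Real.norm_eq_abs, abs_of_pos hNR]
      calc (N:ℝ) * ‖B‖ ≤ (N:ℝ) * (C_V * t) := mul_le_mul_of_nonneg_left hBle hNR.le
        _ = C_V * ((N:ℝ) * t) := by ring
    have hmain := softmax_diff_le hs_pos hNt_pos hBle' hAB hST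
    have hrw : t⁻¹ • B = ((N:ℝ) * t)⁻¹ • ((N:ℝ) • B) := by
      have hinv : ((N:ℝ) * t)⁻¹ * (N:ℝ) = t⁻¹ := by
        rw [mul_inv]
        field_simp [ht_pos.ne']
      rw [smul_smul, hinv]
    rw [hgy, hrw]
    refine hmain.trans ?_
    -- arithmetic
    have hs_ne : s ≠ 0 := hs_pos.ne'
    have step1 : (C_V * ρ * s + (N:ℝ) * c1) / s = C_V * ρ + c1 * ((N:ℝ) / s) := by
      field_simp
    have step2 : C_V * ((N:ℝ) * c2) / s = (C_V * c2) * ((N:ℝ) / s) := by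
      field_simp
    rw [step1, step2]
    have hc1nn : 0 ≤ c1 := by rw [hc1]; positivity
    have hb1 : c1 * ((N:ℝ) / s) ≤ c1 * E := mul_le_mul_of_nonneg_left hNs hc1nn
    have hb2 : (C_V * c2) * ((N:ℝ) / s) ≤ (C_V * c2) * E := by
      apply mul_le_mul_of_nonneg_left hNs
      rw [hc2]; positivity
    calc C_V * ρ + c1 * ((N:ℝ) / s) + C_V * c2 * ((N:ℝ) / s)
        ≤ C_V * ρ + c1 * E + (C_V * c2) * E := by linarith
      _ = Btot := by rw [hBtot, hc1, hc2]; ring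
  -- conclude by integration
  have hfin : Btot ≤ ΔΦ + 2 * Real.exp (2 * M) * C_Q * C_K * C_V * r := by
    rw [hΔΦ, hBtot, hE2, hρ]
    nlinarith [mul_nonneg (mul_nonneg (sub_nonneg.mpr hE1) hCV.le) hr.le,
      mul_pos (mul_pos (mul_pos hCQ hCK) hCV) hr]
  calc (∫ y, ‖g y - ((∫ z, Real.exp ⟪Q (f y), K (f z)⟫ ∂μ)⁻¹ •
          (∫ z, Real.exp ⟪Q (f y), K (f z)⟫ • V (f z) ∂μ))‖ ∂μ)
      ≤ ∫ _y, Btot ∂μ := by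
        apply integral_mono_of_nonneg (Filter.Eventually.of_forall fun y => norm_nonneg _)
          (integrable_const _) (Filter.Eventually.of_forall hpt)
    _ = Btot := by simp
    _ ≤ _ := hfin
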